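/- The 4×4 Hermitian matrix X := (x₋-x₊)(|1⟩⟨2|+|2⟩⟨1|) + √(x₊x₋)(|0⟩⟨1|+|1⟩⟨0|+|2⟩⟨3|+|3⟩⟨2|), for x₋ > x₊ > 0, has eigenvalues exactly {-x₋, -x₊, x₊, x₋}. -/

import Mathlib

set_option maxHeartbeats 1000000


open Real Matrix

theorem stmt_8 (xp xm : ℝ) (hxp : 0 < xp) (hlt : xp < xm)
    (X : Matrix (Fin 4) (Fin 4) ℂ)
    (hX : X = !![0, (Real.sqrt (xp * xm) : ℂ), 0, 0;
                 (Real.sqrt (xp * xm) : ℂ), 0, ((xm - xp : ℝ) : ℂ), 0;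
                 0, ((xm - xp : ℝ) : ℂ), 0, (Real.sqrt (xp * xm) : ℂ);
                 0, 0, (Real.sqrt (xp * xm) : ℂ), 0]) :
    spectrum ℂ X = {(-xm : ℂ), (-xp : ℂ), (xp : ℂ), (xm : ℂ)} := by
  have hs2 : ((Real.sqrt (xp * xm) : ℂ)) ^ 2 = (xp : ℂ) * xm := by
    rw [← Complex.ofReal_pow, Real.sq_sqrt (mul_nonneg hxp.le (hxp.trans hlt).le),
      Complex.ofReal_mul]
  ext z
  rw [spectrum.mem_iff]
  rw [Matrix.isUnit_iff_isUnit_det]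
  rw [isUnit_iff_ne_zero, not_ne_iff]
  have hdet : ((algebraMap ℂ (Matrix (Fin 4) (Fin 4) ℂ)) z - X).det
      = (z - xp) * (z + xp) * (z - xm) * (z + xm) := by
    have hM : (algebraMap ℂ (Matrix (Fin 4) (Fin 4) ℂ)) z - X
        = !![z, -(Real.sqrt (xp * xm) : ℂ), 0, 0;
             -(Real.sqrt (xp * xm) : ℂ), z, -((xm - xp : ℝ) : ℂ), 0;
             0, -((xm - xp : ℝ) : ℂ), z, -(Real.sqrt (xp * xm) : ℂ);
             0, 0, -(Real.sqrt (xp * xm) : ℂ), z] := by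
      rw [hX, Matrix.algebraMap_eq_diagonal]
      ext i j
      fin_cases i <;> fin_cases j <;>
        simp [Matrix.diagonal, Matrix.vecHead, Matrix.vecTail]
    rw [hM]
    simp [Matrix.det_succ_row_zero, Fin.sum_univ_succ, Fin.succAbove]
    ring_nf
    rw [show ((Real.sqrt (xp * xm) : ℂ)) ^ 4 = ((xp:ℂ)*xm)^2 by
      rw [show (4:ℕ) = 2*2 from rfl, pow_mul, hs2]]
    rw [hs2]
    ring
  rw [hdet]
  simp only [Set.mem_insert_iff, Set.mem_singleton_iff, mul_eq_zero, sub_eq_zero, add_eq_zero_iff_eq_neg]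
  tauto
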